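/- Let D be an eulerian digraph and let s, t be distinct vertices such that every edge cut of the underlying undirected graph separating s and t has at least 4 edges. Then D has a directed euler circuit that interlaces s and t, i.e., a directed euler circuit whose cyclic vertex sequence contains occurrences of s, t, s, t in that cyclic order. -/

import Mathlib

set_option linter.unusedSectionVars false
set_option linter.unusedVariables false

/-- Directed walks in a digraph given by source/target maps. -/
def IsDiWalk {V A : Type} (src tgt : A → V) : V → V → List A → Prop
  | s, t, [] => s = t
  | s, t, a :: l => src a = s ∧ IsDiWalk src tgt (tgt a) t l

namespace Stmt5

variable {V A : Type} [DecidableEq V] [DecidableEq A]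

section Walks
variable (src tgt : A → V)

theorem walk_nil {x y : V} : IsDiWalk src tgt x y ([] : List A) ↔ x = y := Iff.rfl

theorem walk_cons {x y : V} {a : A} {l : List A} :
    IsDiWalk src tgt x y (a :: l) ↔ src a = x ∧ IsDiWalk src tgt (tgt a) y l := Iff.rfl

theorem walk_append {x y z : V} {l1 l2 : List A} (h1 : IsDiWalk src tgt x y l1)
    (h2 : IsDiWalk src tgt y z l2) : IsDiWalk src tgt x z (l1 ++ l2) := by
  induction l1 generalizing x with
  | nil => cases h1; simpa using h2
  | cons a l ih => exact ⟨h1.1, ih h1.2⟩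

theorem walk_append_split {x z : V} {l1 l2 : List A}
    (h : IsDiWalk src tgt x z (l1 ++ l2)) :
    ∃ y, IsDiWalk src tgt x y l1 ∧ IsDiWalk src tgt y z l2 := by
  induction l1 generalizing x with
  | nil => exact ⟨x, rfl, h⟩
  | cons a l ih =>
    obtain ⟨y, hy1, hy2⟩ := ih h.2
    exact ⟨y, ⟨h.1, hy1⟩, hy2⟩

theorem walk_singleton {x y : V} {a : A} :
    IsDiWalk src tgt x y [a] ↔ src a = x ∧ tgt a = y := Iff.rfl

/-- Any walk contains a duplicate-free walk as a sublist. -/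
theorem walk_to_trail_aux : ∀ (n : ℕ) (l : List A) (x y : V), l.length ≤ n →
    IsDiWalk src tgt x y l →
    ∃ l', IsDiWalk src tgt x y l' ∧ l'.Nodup ∧ l'.Sublist l := by
  intro n
  induction n with
  | zero =>
    intro l x y hl h
    rw [Nat.le_zero, List.length_eq_zero_iff] at hl
    subst hl
    exact ⟨[], h, List.nodup_nil, List.Sublist.refl _⟩
  | succ n ih =>
    intro l x y hl h
    match l, h with
    | [], h => exact ⟨[], h, List.nodup_nil, List.Sublist.refl _⟩
    | a :: l, h =>
      by_cases ha : a ∈ l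
      · obtain ⟨l1, l2, rfl⟩ := List.append_of_mem ha
        obtain ⟨z, hz1, hz2⟩ := walk_append_split src tgt h.2
        have h' : IsDiWalk src tgt x y (a :: l2) := ⟨h.1, hz2.2⟩
        have hlen : (a :: l2).length ≤ n := by
          simp only [List.length_cons, List.length_append] at hl ⊢
          omega
        obtain ⟨l', hw, hn, hs⟩ := ih _ x y hlen h'
        refine ⟨l', hw, hn, hs.trans ?_⟩
        exact (List.sublist_append_right l1 (a :: l2)).cons a
      · have hlen : l.length ≤ n := by simpa using hl
        obtain ⟨l', hw, hn, hs⟩ := ih l (tgt a) y hlen h.2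
        refine ⟨a :: l', ⟨h.1, hw⟩, ?_, hs.cons₂ a⟩
        exact List.nodup_cons.2 ⟨fun hm => ha (hs.mem hm), hn⟩

theorem walk_to_trail {x y : V} {l : List A} (h : IsDiWalk src tgt x y l) :
    ∃ l', IsDiWalk src tgt x y l' ∧ l'.Nodup ∧ l'.Sublist l :=
  walk_to_trail_aux src tgt l.length l x y le_rfl h

/-- The vertex list of a nonempty walk ends at the endpoint. -/
theorem walk_map_tgt {x y : V} {l : List A} (h : IsDiWalk src tgt x y l) (hne : l ≠ []) :
    ∃ m, l.map tgt = m ++ [y] := by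
  induction l generalizing x with
  | nil => exact absurd rfl hne
  | cons a l ih =>
    rcases eq_or_ne l [] with rfl | hl
    · exact ⟨[], by simp [show tgt a = y from h.2]⟩
    · obtain ⟨m, hm⟩ := ih h.2 hl
      exact ⟨tgt a :: m, by simp [hm]⟩

end Walks

section Deg

/-- Number of arcs in `R` whose endpoint (via `f`) is `v`. -/
def deg (f : A → V) (R : Finset A) (v : V) : ℕ := (R.filter (fun a => f a = v)).card

theorem deg_erase (f : A → V) {R : Finset A} {a : A} (ha : a ∈ R) (v : V) :
    deg f (R.erase a) v + (if f a = v then 1 else 0) = deg f R v := by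
  unfold deg
  rw [Finset.filter_erase]
  by_cases h : f a = v
  · rw [Finset.card_erase_of_mem (Finset.mem_filter.2 ⟨ha, h⟩), if_pos h]
    have : 0 < (Finset.filter (fun a => f a = v) R).card :=
      Finset.card_pos.2 ⟨a, Finset.mem_filter.2 ⟨ha, h⟩⟩
    omega
  · have hnm : a ∉ Finset.filter (fun a => f a = v) R := fun hm => h (Finset.mem_filter.1 hm).2
    rw [Finset.erase_eq_of_notMem hnm, if_neg h, add_zero]

theorem deg_union (f : A → V) {R S : Finset A} (h : Disjoint R S) (v : V) :
    deg f (R ∪ S) v = deg f R v + deg f S v := by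
  unfold deg
  rw [Finset.filter_union, Finset.card_union_of_disjoint]
  exact Finset.disjoint_filter_filter h

theorem deg_sdiff (f : A → V) {R S : Finset A} (h : S ⊆ R) (v : V) :
    deg f (R \ S) v + deg f S v = deg f R v := by
  have h2 : Disjoint (R \ S) S := Finset.sdiff_disjoint
  rw [← deg_union f h2, Finset.sdiff_union_of_subset h]

theorem exists_of_deg_pos {f : A → V} {R : Finset A} {v : V} (h : 0 < deg f R v) :
    ∃ a ∈ R, f a = v := by
  obtain ⟨a, ha⟩ := Finset.card_pos.1 h
  exact ⟨a, (Finset.mem_filter.1 ha).1, (Finset.mem_filter.1 ha).2⟩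

theorem count_eq_deg (f : A → V) {l : List A} (hl : l.Nodup) (v : V) :
    (l.map f).count v = deg f l.toFinset v := by
  induction l with
  | nil => simp [deg]
  | cons a l ih =>
    have ha : a ∉ l := (List.nodup_cons.1 hl).1
    have ha' : a ∉ l.toFinset := by simpa using ha
    unfold deg
    rw [List.toFinset_cons, Finset.filter_insert]
    by_cases h : f a = v
    · rw [if_pos h, Finset.card_insert_of_notMem (fun hm => ha' (Finset.mem_filter.1 hm).1)]
      simp only [List.map_cons, List.count_cons, h]
      rw [ih (List.nodup_cons.1 hl).2]
      simp [deg]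
    · rw [if_neg h]
      simp only [List.map_cons, List.count_cons]
      rw [ih (List.nodup_cons.1 hl).2]
      simp [deg, h]

/-- Divergence of a walk: `src`-count minus `tgt`-count. -/
theorem walk_count (src tgt : A → V) {x y : V} {l : List A}
    (h : IsDiWalk src tgt x y l) (v : V) :
    ((l.map src).count v : ℤ) - (l.map tgt).count v =
      (if x = v then 1 else 0) - (if y = v then 1 else 0) := by
  induction l generalizing x with
  | nil =>
    cases h
    simp
  | cons a l ih =>
    obtain ⟨rfl, h2⟩ := h
    have H := ih h2
    simp only [List.map_cons, List.count_cons, beq_iff_eq]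
    push_cast
    split_ifs at H ⊢ <;> omega

end Deg

section Extract
variable (src tgt : A → V)

/-- Key extraction lemma: if every vertex other than `u` has out-degree in `R`
at least its in-degree, plus one extra at `w`, then there is a trail from `w`
to `u` using distinct arcs of `R`. -/
theorem extract_trail (u : V) : ∀ (n : ℕ) (R : Finset A) (w : V), R.card ≤ n →
    (∀ v, v ≠ u → deg tgt R v + (if w = v then 1 else 0) ≤ deg src R v) →
    ∃ l, IsDiWalk src tgt w u l ∧ l.Nodup ∧ ∀ a ∈ l, a ∈ R := by
  intro n
  induction n with
  | zero =>
    intro R w hcard hyp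
    rcases eq_or_ne w u with rfl | hwu
    · exact ⟨[], rfl, List.nodup_nil, by simp⟩
    · exfalso
      have h1 := hyp w hwu
      rw [if_pos rfl] at h1
      have h2 : deg src R w ≤ R.card := Finset.card_le_card (Finset.filter_subset _ _)
      omega
  | succ n ih =>
    intro R w hcard hyp
    rcases eq_or_ne w u with rfl | hwu
    · exact ⟨[], rfl, List.nodup_nil, by simp⟩
    · have h1 := hyp w hwu
      rw [if_pos rfl] at h1
      have hpos : 0 < deg src R w := by omega
      obtain ⟨a, haR, hsrc⟩ := exists_of_deg_pos hpos
      subst hsrc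
      have hcard' : (R.erase a).card ≤ n := by
        rw [Finset.card_erase_of_mem haR]; omega
      have hyp' : ∀ v, v ≠ u →
          deg tgt (R.erase a) v + (if tgt a = v then 1 else 0) ≤ deg src (R.erase a) v := by
        intro v hv
        have e1 := deg_erase tgt haR v
        have e2 := deg_erase src haR v
        have h3 := hyp v hv
        split_ifs at e1 e2 h3 ⊢ <;> omega
      obtain ⟨l, hw, hn, hm⟩ := ih (R.erase a) (tgt a) hcard' hyp'
      refine ⟨a :: l, ⟨rfl, hw⟩, ?_, ?_⟩
      · exact List.nodup_cons.2 ⟨fun h => (Finset.mem_erase.1 (hm a h)).1 rfl, hn⟩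
      · intro b hb
        rcases List.mem_cons.1 hb with rfl | hb
        · exact haR
        · exact Finset.mem_of_mem_erase (hm b hb)

end Extract

section Cuts
variable (src tgt : A → V)

theorem sum_deg (f : A → V) (F : Finset A) (U : Finset V) :
    ∑ v ∈ U, deg f F v = (F.filter (fun a => f a ∈ U)).card := by
  rw [Finset.card_eq_sum_card_fiberwise
    (s := F.filter (fun a => f a ∈ U)) (f := f) (t := U) (fun a ha => (Finset.mem_filter.1 ha).2)]
  apply Finset.sum_congr rfl
  intro v hv
  unfold deg
  congr 1
  ext a
  simp only [Finset.mem_filter, and_assoc]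
  constructor
  · rintro ⟨h1, h2⟩; exact ⟨h1, by simp [h2, hv], h2⟩
  · rintro ⟨h1, h2, h3⟩; exact ⟨h1, h3⟩

theorem card_filter_split (f g : A → V) (F : Finset A) (U : Finset V) :
    (F.filter (fun a => f a ∈ U)).card =
      (F.filter (fun a => f a ∈ U ∧ g a ∈ U)).card +
      (F.filter (fun a => f a ∈ U ∧ g a ∉ U)).card := by
  rw [← Finset.filter_filter, ← Finset.filter_filter,
    Finset.card_filter_add_card_filter_not]

theorem filter_sdiff_card {α : Type} [DecidableEq α] {R S : Finset α} (h : S ⊆ R)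
    (p : α → Prop) [DecidablePred p] :
    ((R \ S).filter p).card + (S.filter p).card = (R.filter p).card := by
  have h1 : (R \ S).filter p = R.filter p \ S.filter p := by
    ext a
    simp only [Finset.mem_filter, Finset.mem_sdiff]
    tauto
  rw [h1, Finset.card_sdiff_of_subset (Finset.filter_subset_filter p h)]
  have := Finset.card_le_card (Finset.filter_subset_filter p h)
  omega

/-- Summing divergence over a vertex set counts cut arcs. -/
theorem sum_dvg (F : Finset A) (U : Finset V) :
    ∑ v ∈ U, ((deg src F v : ℤ) - deg tgt F v) =
      ((F.filter (fun a => src a ∈ U ∧ tgt a ∉ U)).card : ℤ) -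
      (F.filter (fun a => tgt a ∈ U ∧ src a ∉ U)).card := by
  rw [Finset.sum_sub_distrib,
    show ∑ x ∈ U, ((deg src F x : ℤ)) = ((∑ x ∈ U, deg src F x : ℕ) : ℤ) by push_cast; ring,
    show ∑ x ∈ U, ((deg tgt F x : ℤ)) = ((∑ x ∈ U, deg tgt F x : ℕ) : ℤ) by push_cast; ring,
    sum_deg src F U, sum_deg tgt F U,
    card_filter_split src tgt F U, card_filter_split tgt src F U]
  have : (F.filter (fun a => src a ∈ U ∧ tgt a ∈ U)).card =
      (F.filter (fun a => tgt a ∈ U ∧ src a ∈ U)).card := by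
    congr 1; ext a; simp [and_comm]
  push_cast
  omega

end Cuts

section Augment
variable [Fintype V] (src tgt : A → V)

/-- Residual source map. -/
private def rsrc (b : A × Bool) : V := if b.2 = true then src b.1 else tgt b.1
/-- Residual target map. -/
private def rtgt (b : A × Bool) : V := if b.2 = true then tgt b.1 else src b.1

theorem count_fors_backs (lb : List (A × Bool)) (v : V) :
    ((lb.map (rsrc src tgt)).count v : ℤ) =
      ((((lb.filter (fun b => b.2 = true)).map Prod.fst).map src).count v : ℤ) +
      (((lb.filter (fun b => b.2 = false)).map Prod.fst).map tgt).count v := by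
  induction lb with
  | nil => simp
  | cons b lb ih =>
    rcases b with ⟨a, d⟩
    cases d
    · rw [show List.filter (fun b => b.2 = true) (((a, false) : A × Bool) :: lb) =
            List.filter (fun b => b.2 = true) lb from by simp,
        show List.filter (fun b => b.2 = false) (((a, false) : A × Bool) :: lb) =
            ((a, false) : A × Bool) :: List.filter (fun b => b.2 = false) lb from by simp]
      simp only [List.map_cons, List.count_cons, beq_iff_eq,
        show rsrc src tgt ((a, false) : A × Bool) = tgt a from rfl]
      push_cast
      split_ifs <;> omega
    · rw [show List.filter (fun b => b.2 = true) (((a, true) : A × Bool) :: lb) =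
            ((a, true) : A × Bool) :: List.filter (fun b => b.2 = true) lb from by simp,
        show List.filter (fun b => b.2 = false) (((a, true) : A × Bool) :: lb) =
            List.filter (fun b => b.2 = false) lb from by simp]
      simp only [List.map_cons, List.count_cons, beq_iff_eq,
        show rsrc src tgt ((a, true) : A × Bool) = src a from rfl]
      push_cast
      split_ifs <;> omega

theorem count_fors_backs' (lb : List (A × Bool)) (v : V) :
    ((lb.map (rtgt src tgt)).count v : ℤ) =
      ((((lb.filter (fun b => b.2 = true)).map Prod.fst).map tgt).count v : ℤ) +
      (((lb.filter (fun b => b.2 = false)).map Prod.fst).map src).count v := by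
  induction lb with
  | nil => simp
  | cons b lb ih =>
    rcases b with ⟨a, d⟩
    cases d
    · rw [show List.filter (fun b => b.2 = true) (((a, false) : A × Bool) :: lb) =
            List.filter (fun b => b.2 = true) lb from by simp,
        show List.filter (fun b => b.2 = false) (((a, false) : A × Bool) :: lb) =
            ((a, false) : A × Bool) :: List.filter (fun b => b.2 = false) lb from by simp]
      simp only [List.map_cons, List.count_cons, beq_iff_eq,
        show rtgt src tgt ((a, false) : A × Bool) = src a from rfl]
      push_cast
      split_ifs <;> omega
    · rw [show List.filter (fun b => b.2 = true) (((a, true) : A × Bool) :: lb) =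
            ((a, true) : A × Bool) :: List.filter (fun b => b.2 = true) lb from by simp,
        show List.filter (fun b => b.2 = false) (((a, true) : A × Bool) :: lb) =
            List.filter (fun b => b.2 = false) lb from by simp]
      simp only [List.map_cons, List.count_cons, beq_iff_eq,
        show rtgt src tgt ((a, true) : A × Bool) = tgt a from rfl]
      push_cast
      split_ifs <;> omega

/-- The augmenting step: a flow of value `k` from `s` to `t` inside `R` can be
increased to value `k+1` provided every `s`-`t` cut of `R` has more than `k` arcs. -/
theorem augment (s t : V) (R F : Finset A) (hFR : F ⊆ R) (k : ℕ)
    (hdvg : ∀ v, (deg src F v : ℤ) - deg tgt F v =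
      k * ((if s = v then 1 else 0) - (if t = v then 1 else 0)))
    (hcut : ∀ U : Finset V, s ∈ U → t ∉ U →
      k + 1 ≤ (R.filter (fun a => src a ∈ U ∧ tgt a ∉ U)).card) :
    ∃ F' : Finset A, F' ⊆ R ∧ ∀ v, (deg src F' v : ℤ) - deg tgt F' v =
      (k + 1 : ℤ) * ((if s = v then 1 else 0) - (if t = v then 1 else 0)) := by
  classical
  set valid : A × Bool → Prop :=
    fun b => if b.2 = true then b.1 ∈ R ∧ b.1 ∉ F else b.1 ∈ F with hvalid
  set step : V → V → Prop :=
    fun x y => ∃ b, valid b ∧ rsrc src tgt b = x ∧ rtgt src tgt b = y with hstep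
  by_cases hreach : Relation.ReflTransGen step s t
  · -- augmenting path exists
    have hwalk : ∀ x, Relation.ReflTransGen step s x →
        ∃ lb, IsDiWalk (rsrc src tgt) (rtgt src tgt) s x lb ∧ ∀ b ∈ lb, valid b := by
      intro x hx
      induction hx with
      | refl => exact ⟨[], rfl, by simp⟩
      | tail _ hstep' ih =>
        obtain ⟨lb, hw, hv⟩ := ih
        obtain ⟨b, hb, hb1, hb2⟩ := hstep'
        refine ⟨lb ++ [b], walk_append _ _ hw ((walk_singleton _ _).2 ⟨hb1, hb2⟩), ?_⟩
        intro c hc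
        rcases List.mem_append.1 hc with h | h
        · exact hv c h
        · rwa [List.mem_singleton.1 h]
    obtain ⟨lb0, hw0, hv0⟩ := hwalk t hreach
    obtain ⟨lb, hw, hnd, hsub⟩ := walk_to_trail _ _ hw0
    have hv : ∀ b ∈ lb, valid b := fun b hb => hv0 b (hsub.mem hb)
    set fors : List A := (lb.filter (fun b => b.2 = true)).map Prod.fst with hfors
    set backs : List A := (lb.filter (fun b => b.2 = false)).map Prod.fst with hbacks
    have hfnd : fors.Nodup := by
      refine List.Nodup.map_on ?_ (hnd.filter _)
      rintro ⟨a, d⟩ hx ⟨a', d'⟩ hy (h : a = a')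
      have := (List.mem_filter.1 hx).2
      have := (List.mem_filter.1 hy).2
      simp_all
    have hbnd : backs.Nodup := by
      refine List.Nodup.map_on ?_ (hnd.filter _)
      rintro ⟨a, d⟩ hx ⟨a', d'⟩ hy (h : a = a')
      have := (List.mem_filter.1 hx).2
      have := (List.mem_filter.1 hy).2
      simp_all
    have hforsR : ∀ a ∈ fors, a ∈ R ∧ a ∉ F := by
      intro a ha
      obtain ⟨⟨a', d⟩, hb, rfl⟩ := List.mem_map.1 ha
      have hd := (List.mem_filter.1 hb).2
      have := hv _ (List.mem_filter.1 hb).1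
      simp only [hvalid] at this
      rw [show d = true by simpa using hd] at this
      simpa using this
    have hbacksF : ∀ a ∈ backs, a ∈ F := by
      intro a ha
      obtain ⟨⟨a', d⟩, hb, rfl⟩ := List.mem_map.1 ha
      have hd := (List.mem_filter.1 hb).2
      have := hv _ (List.mem_filter.1 hb).1
      simp only [hvalid] at this
      rw [show d = false by simpa using hd] at this
      simpa using this
    have hdisj : Disjoint (F \ backs.toFinset) fors.toFinset := by
      rw [Finset.disjoint_right]
      intro a ha
      simp only [Finset.mem_sdiff]
      intro ⟨haF, _⟩
      exact (hforsR a (List.mem_toFinset.1 ha)).2 haF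
    have hbsub : backs.toFinset ⊆ F := fun a ha => hbacksF a (List.mem_toFinset.1 ha)
    refine ⟨(F \ backs.toFinset) ∪ fors.toFinset, ?_, ?_⟩
    · intro a ha
      rcases Finset.mem_union.1 ha with h | h
      · exact hFR (Finset.mem_sdiff.1 h).1
      · exact (hforsR a (List.mem_toFinset.1 h)).1
    · intro v
      have e1 : ∀ f : A → V, deg f ((F \ backs.toFinset) ∪ fors.toFinset) v =
          deg f (F \ backs.toFinset) v + deg f fors.toFinset v :=
        fun f => deg_union f hdisj v
      have e2 : ∀ f : A → V, deg f (F \ backs.toFinset) v + deg f backs.toFinset v =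
          deg f F v := fun f => deg_sdiff f hbsub v
      have e3 : deg src fors.toFinset v = (fors.map src).count v :=
        (count_eq_deg src hfnd v).symm
      have e4 : deg tgt fors.toFinset v = (fors.map tgt).count v :=
        (count_eq_deg tgt hfnd v).symm
      have e5 : deg src backs.toFinset v = (backs.map src).count v :=
        (count_eq_deg src hbnd v).symm
      have e6 : deg tgt backs.toFinset v = (backs.map tgt).count v :=
        (count_eq_deg tgt hbnd v).symm
      have e7 := count_fors_backs src tgt lb v
      have e8 := count_fors_backs' src tgt lb v
      have e9 := walk_count (rsrc src tgt) (rtgt src tgt) hw v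
      have e10 := hdvg v
      rw [← hfors, ← hbacks] at e7 e8
      have e1s := e1 src
      have e1t := e1 tgt
      have e2s := e2 src
      have e2t := e2 tgt
      zify at e1s e1t e2s e2t e3 e4 e5 e6
      rw [e1s, e1t]
      split_ifs at e9 e10 ⊢ <;> linarith [e2s, e2t, e3, e4, e5, e6, e7, e8]
  · -- no augmenting path: contradiction with the cut condition
    exfalso
    set U : Finset V := Finset.univ.filter (fun x => Relation.ReflTransGen step s x) with hU
    have hsU : s ∈ U := by
      simp only [hU, Finset.mem_filter, Finset.mem_univ, true_and]
      exact Relation.ReflTransGen.refl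
    have htU : t ∉ U := by simp [hU, hreach]
    have hclosed : ∀ b, valid b → rsrc src tgt b ∈ U → rtgt src tgt b ∈ U := by
      intro b hb hmem
      simp only [hU, Finset.mem_filter, Finset.mem_univ, true_and] at hmem ⊢
      exact hmem.tail ⟨b, hb, rfl, rfl⟩
    -- forward cut arcs of R are all in F
    have hcutF : R.filter (fun a => src a ∈ U ∧ tgt a ∉ U) =
        F.filter (fun a => src a ∈ U ∧ tgt a ∉ U) := by
      ext a
      simp only [Finset.mem_filter]
      constructor
      · rintro ⟨haR, h1, h2⟩
        refine ⟨?_, h1, h2⟩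
        by_contra haF
        exact h2 (hclosed (a, true) (by simp [hvalid, haR, haF]) (by simpa [rsrc] using h1))
      · rintro ⟨haF, h1, h2⟩
        exact ⟨hFR haF, h1, h2⟩
    have hcutB : F.filter (fun a => tgt a ∈ U ∧ src a ∉ U) = ∅ := by
      rw [Finset.eq_empty_iff_forall_notMem]
      intro a ha
      obtain ⟨haF, h1, h2⟩ := Finset.mem_filter.1 ha
      exact h2 (hclosed (a, false) (by simp [hvalid, haF]) (by simpa [rsrc, rtgt] using h1))
    have hsum := sum_dvg src tgt F U
    have hsum2 : ∑ v ∈ U, ((deg src F v : ℤ) - deg tgt F v) = k := by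
      rw [Finset.sum_congr rfl (fun v _ => hdvg v), ← Finset.mul_sum,
        Finset.sum_sub_distrib, Finset.sum_ite_eq, Finset.sum_ite_eq,
        if_pos hsU, if_neg htU]
      ring
    have hF := hcut U hsU htU
    rw [hcutF] at hF
    rw [hsum2, hcutB] at hsum
    simp only [Finset.card_empty, Nat.cast_zero, sub_zero] at hsum
    omega

end Augment

section TwoTrails
variable [Fintype V] (src tgt : A → V)

/-- Menger-type result: a cut condition of `2` gives two arc-disjoint trails. -/
theorem two_trails (s t : V) (hst : s ≠ t) (R : Finset A)
    (hcut : ∀ U : Finset V, s ∈ U → t ∉ U →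
      2 ≤ (R.filter (fun a => src a ∈ U ∧ tgt a ∉ U)).card) :
    ∃ P1 P2 : List A, IsDiWalk src tgt s t P1 ∧ IsDiWalk src tgt s t P2 ∧
      P1.Nodup ∧ P2.Nodup ∧ (∀ a ∈ P1, a ∈ R) ∧ (∀ a ∈ P2, a ∈ R) ∧
      (∀ a ∈ P1, a ∉ P2) := by
  have hdvg0 : ∀ v, ((deg src (∅ : Finset A) v : ℤ) - deg tgt (∅ : Finset A) v) =
      (0 : ℕ) * ((if s = v then 1 else 0) - (if t = v then 1 else 0)) := by
    intro v; simp [deg]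
  obtain ⟨F1, hF1R, hF1⟩ := augment src tgt s t R ∅ (Finset.empty_subset R) 0 hdvg0
    (fun U hs ht => le_trans (by norm_num) (hcut U hs ht))
  obtain ⟨F, hFR, hF⟩ := augment src tgt s t R F1 hF1R 1 (by exact_mod_cast hF1)
    (fun U hs ht => hcut U hs ht)
  -- extract first trail
  have hyp1 : ∀ v, v ≠ t → deg tgt F v + (if s = v then 1 else 0) ≤ deg src F v := by
    intro v hv
    have h1 := hF v
    rw [if_neg (fun h : t = v => hv h.symm)] at h1
    by_cases hs : s = v
    · rw [if_pos hs] at h1 ⊢; norm_num at h1; omega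
    · rw [if_neg hs] at h1 ⊢; norm_num at h1; omega
  obtain ⟨P1, hP1w, hP1nd, hP1F⟩ := extract_trail src tgt t F.card F s le_rfl hyp1
  have hP1sub : P1.toFinset ⊆ F := fun a ha => hP1F a (List.mem_toFinset.1 ha)
  have hP1dvg : ∀ v, ((deg src P1.toFinset v : ℤ) - deg tgt P1.toFinset v) =
      (if s = v then 1 else 0) - (if t = v then 1 else 0) := by
    intro v
    rw [← count_eq_deg src hP1nd v, ← count_eq_deg tgt hP1nd v]
    exact walk_count src tgt hP1w v
  have hyp2 : ∀ v, v ≠ t →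
      deg tgt (F \ P1.toFinset) v + (if s = v then 1 else 0) ≤
        deg src (F \ P1.toFinset) v := by
    intro v hv
    have h1 := hF v
    have h2 := hP1dvg v
    have e1 := deg_sdiff src hP1sub v
    have e2 := deg_sdiff tgt hP1sub v
    rw [if_neg (fun h : t = v => hv h.symm)] at h1 h2
    by_cases hs : s = v
    · rw [if_pos hs] at h1 h2 ⊢; norm_num at h1 h2; omega
    · rw [if_neg hs] at h1 h2 ⊢; norm_num at h1 h2; omega
  obtain ⟨P2, hP2w, hP2nd, hP2F⟩ :=
    extract_trail src tgt t (F \ P1.toFinset).card (F \ P1.toFinset) s le_rfl hyp2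
  refine ⟨P1, P2, hP1w, hP2w, hP1nd, hP2nd,
    fun a ha => hFR (hP1F a ha),
    fun a ha => hFR (Finset.mem_sdiff.1 (hP2F a ha)).1, ?_⟩
  intro a ha hmem
  exact (Finset.mem_sdiff.1 (hP2F a hmem)).2 (List.mem_toFinset.2 ha)

end TwoTrails

section Euler
variable [Fintype A] (src tgt : A → V)

/-- A closed trail through a given arc inside a balanced arc set. -/
theorem closed_trail_at {R : Finset A} (hbal : ∀ v, deg tgt R v = deg src R v)
    {a : A} (ha : a ∈ R) :
    ∃ l, IsDiWalk src tgt (src a) (src a) (a :: l) ∧ (a :: l).Nodup ∧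
      ∀ b ∈ a :: l, b ∈ R := by
  have hyp : ∀ v, v ≠ src a →
      deg tgt (R.erase a) v + (if tgt a = v then 1 else 0) ≤ deg src (R.erase a) v := by
    intro v hv
    have e1 := deg_erase tgt ha v
    have e2 := deg_erase src ha v
    have e3 := hbal v
    have : ¬(src a = v) := fun h => hv h.symm
    split_ifs at e1 e2 ⊢ <;> omega
  obtain ⟨l, hw, hnd, hm⟩ :=
    extract_trail src tgt (src a) (R.erase a).card (R.erase a) (tgt a) le_rfl hyp
  refine ⟨l, ⟨rfl, hw⟩, ?_, ?_⟩
  · exact List.nodup_cons.2 ⟨fun h => (Finset.mem_erase.1 (hm a h)).1 rfl, hnd⟩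
  · intro b hb
    rcases List.mem_cons.1 hb with rfl | hb
    · exact ha
    · exact Finset.mem_of_mem_erase (hm b hb)

/-- Along a walk starting in `T`, the first arc outside `S` leaves from a
vertex reachable by arcs of `S`. -/
theorem first_new_arc (P : V → Prop) (S : List A) :
    ∀ (w : List A) (x y : V), IsDiWalk src tgt x y w → (∃ a ∈ w, a ∉ S) →
    P x → (∀ a ∈ S, P (tgt a)) → ∃ a, a ∉ S ∧ P (src a) := by
  intro w
  induction w with
  | nil => rintro x y _ ⟨a, ha, _⟩ _ _; exact absurd ha List.not_mem_nil
  | cons c w ih =>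
    rintro x y hwalk ⟨a, ha, haS⟩ hx hT
    by_cases hc : c ∈ S
    · rcases List.mem_cons.1 ha with rfl | ha'
      · exact absurd hc haS
      · exact ih (tgt c) y hwalk.2 ⟨a, ha', haS⟩ (hT c hc) hT
    · exact ⟨c, hc, by rw [hwalk.1]; exact hx⟩

/-- Split a closed walk at a vertex it visits. -/
theorem split_walk {u v : V} {l : List A} (hw : IsDiWalk src tgt u u l)
    (hv : v = u ∨ ∃ c ∈ l, tgt c = v) :
    ∃ l1 l2, l = l1 ++ l2 ∧ IsDiWalk src tgt u v l1 ∧ IsDiWalk src tgt v u l2 := by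
  rcases hv with rfl | ⟨c, hc, rfl⟩
  · exact ⟨[], l, rfl, rfl, hw⟩
  · obtain ⟨p, q, rfl⟩ := List.append_of_mem hc
    obtain ⟨z, hz1, hz2⟩ := walk_append_split src tgt hw
    refine ⟨p ++ [c], q, by simp, ?_, hz2.2⟩
    exact walk_append src tgt hz1 ((walk_singleton src tgt).2 ⟨hz2.1, rfl⟩)

/-- Hierholzer: every closed trail extends to an euler circuit. -/
theorem euler_extend (hbal : ∀ v, deg tgt (Finset.univ : Finset A) v =
      deg src (Finset.univ : Finset A) v)
    (hconn : ∀ x y : V, ∃ w : List A, IsDiWalk src tgt x y w) :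
    ∀ (n : ℕ) (l : List A) (u : V), IsDiWalk src tgt u u l → l.Nodup →
    ((Finset.univ : Finset A) \ l.toFinset).card ≤ n →
    ∃ L, IsDiWalk src tgt u u L ∧ L.Nodup ∧ (∀ a : A, a ∈ L) ∧ l.Sublist L := by
  intro n
  induction n with
  | zero =>
    intro l u hw hnd hcard
    refine ⟨l, hw, hnd, ?_, List.Sublist.refl l⟩
    intro a
    have : (Finset.univ : Finset A) \ l.toFinset = ∅ := Finset.card_eq_zero.1 (by omega)
    have : a ∈ l.toFinset := by
      by_contra h
      exact absurd (Finset.mem_sdiff.2 ⟨Finset.mem_univ a, h⟩) (this ▸ Finset.notMem_empty a)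
    exact List.mem_toFinset.1 this
  | succ n ih =>
    intro l u hw hnd hcard
    rcases Finset.eq_empty_or_nonempty ((Finset.univ : Finset A) \ l.toFinset) with he | hne
    · refine ⟨l, hw, hnd, ?_, List.Sublist.refl l⟩
      intro a
      have : a ∈ l.toFinset := by
        by_contra h
        exact absurd (Finset.mem_sdiff.2 ⟨Finset.mem_univ a, h⟩) (he ▸ Finset.notMem_empty a)
      exact List.mem_toFinset.1 this
    · set R : Finset A := (Finset.univ : Finset A) \ l.toFinset with hR
      have hlsub : l.toFinset ⊆ Finset.univ := Finset.subset_univ _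
      have hldvg : ∀ v, deg tgt l.toFinset v = deg src l.toFinset v := by
        intro v
        have h1 := walk_count src tgt hw v
        rw [← count_eq_deg src hnd v, ← count_eq_deg tgt hnd v]
        omega
      have hRbal : ∀ v, deg tgt R v = deg src R v := by
        intro v
        rw [hR]
        have e1 := deg_sdiff tgt hlsub v
        have e2 := deg_sdiff src hlsub v
        have h4 := hldvg v
        have h5 := hbal v
        omega
      obtain ⟨b, hb⟩ := hne
      obtain ⟨w0, hw0⟩ := hconn u (src b)
      have hwalkb : IsDiWalk src tgt u (tgt b) (w0 ++ [b]) :=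
        walk_append src tgt hw0 ((walk_singleton src tgt).2 ⟨rfl, rfl⟩)
      have hbl : b ∉ l := fun h => (Finset.mem_sdiff.1 hb).2 (List.mem_toFinset.2 h)
      obtain ⟨a, haS, haP⟩ := first_new_arc src tgt
        (fun v => v = u ∨ ∃ c ∈ l, tgt c = v) l (w0 ++ [b]) u (tgt b) hwalkb
        ⟨b, by simp, hbl⟩ (Or.inl rfl) (fun c hc => Or.inr ⟨c, hc, rfl⟩)
      have haR : a ∈ R := Finset.mem_sdiff.2 ⟨Finset.mem_univ a, fun h => haS (List.mem_toFinset.1 h)⟩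
      obtain ⟨l1, l2, rfl, hw1, hw2⟩ := split_walk src tgt hw haP
      obtain ⟨T, hTw, hTnd, hTm⟩ := closed_trail_at src tgt hRbal haR
      have hTdisj : ∀ c ∈ a :: T, c ∉ l1 ++ l2 := by
        intro c hc hcl
        exact (Finset.mem_sdiff.1 (hTm c hc)).2 (List.mem_toFinset.2 hcl)
      have hnd' : (l1 ++ ((a :: T) ++ l2)).Nodup := by
        have h12 := List.nodup_append.1 hnd
        rw [List.nodup_append, List.nodup_append]
        refine ⟨h12.1, ⟨hTnd, h12.2.1, ?_⟩, ?_⟩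
        · intro c hc _ hc2 rfl
          exact hTdisj c hc (List.mem_append_right l1 hc2)
        · intro c hc1 _ hmem rfl
          rcases List.mem_append.1 hmem with h | h
          · exact hTdisj c h (List.mem_append_left l2 hc1)
          · exact h12.2.2 c hc1 c h rfl
      have hw' : IsDiWalk src tgt u u (l1 ++ ((a :: T) ++ l2)) :=
        walk_append src tgt hw1 (walk_append src tgt hTw hw2)
      have hcard' : ((Finset.univ : Finset A) \ (l1 ++ ((a :: T) ++ l2)).toFinset).card ≤ n := by
        have hsub2 : (Finset.univ : Finset A) \ (l1 ++ ((a :: T) ++ l2)).toFinset ⊆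
            R.erase a := by
          intro c hc
          obtain ⟨_, hc2⟩ := Finset.mem_sdiff.1 hc
          simp only [List.toFinset_append, Finset.mem_union, List.mem_toFinset,
            List.toFinset_cons, Finset.mem_insert] at hc2
          push_neg at hc2
          refine Finset.mem_erase.2 ⟨hc2.2.1.1, Finset.mem_sdiff.2 ⟨Finset.mem_univ c, ?_⟩⟩
          intro hcl
          rcases List.mem_append.1 (List.mem_toFinset.1 hcl) with h | h
          · exact hc2.1 h
          · exact hc2.2.2 h
        have := Finset.card_le_card hsub2
        rw [Finset.card_erase_of_mem haR] at this
        have hRcard : R.card ≤ n + 1 := hcard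
        omega
      obtain ⟨L, hLw, hLnd, hLall, hLsub⟩ := ih (l1 ++ ((a :: T) ++ l2)) u hw' hnd' hcard'
      refine ⟨L, hLw, hLnd, hLall, ?_⟩
      exact ((List.Sublist.refl l1).append (List.sublist_append_right (a :: T) l2)).trans hLsub

end Euler

section Final
variable [Fintype V] [Fintype A] (src tgt : A → V)

theorem trail_dvg {x y : V} {l : List A} (hw : IsDiWalk src tgt x y l)
    (hnd : l.Nodup) (v : V) :
    ((deg src l.toFinset v : ℤ) - deg tgt l.toFinset v) =
      (if x = v then 1 else 0) - (if y = v then 1 else 0) := by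
  rw [← count_eq_deg src hnd v, ← count_eq_deg tgt hnd v]
  exact walk_count src tgt hw v

theorem dir_cut_bound (hbal : ∀ v, deg tgt (Finset.univ : Finset A) v =
      deg src (Finset.univ : Finset A) v) (s t : V) (U : Finset V)
    (h4 : 4 ≤ (Finset.univ.filter (fun a : A =>
      (src a ∈ U ∧ tgt a ∉ U) ∨ (tgt a ∈ U ∧ src a ∉ U))).card) :
    2 ≤ (Finset.univ.filter (fun a : A => src a ∈ U ∧ tgt a ∉ U)).card ∧
    (Finset.univ.filter (fun a : A => tgt a ∈ U ∧ src a ∉ U)).card =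
      (Finset.univ.filter (fun a : A => src a ∈ U ∧ tgt a ∉ U)).card := by
  have hsplit : (Finset.univ.filter (fun a : A =>
      (src a ∈ U ∧ tgt a ∉ U) ∨ (tgt a ∈ U ∧ src a ∉ U))).card =
      (Finset.univ.filter (fun a : A => src a ∈ U ∧ tgt a ∉ U)).card +
      (Finset.univ.filter (fun a : A => tgt a ∈ U ∧ src a ∉ U)).card := by
    rw [Finset.filter_or, Finset.card_union_of_disjoint]
    rw [Finset.disjoint_filter]
    rintro a _ ⟨h1, h2⟩ ⟨h3, h4⟩
    exact h4 h1
  have hbal0 : ∑ v ∈ U, ((deg src (Finset.univ : Finset A) v : ℤ) -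
      deg tgt (Finset.univ : Finset A) v) = 0 := by
    apply Finset.sum_eq_zero
    intro v _
    rw [hbal v]; ring
  have := sum_dvg src tgt (Finset.univ : Finset A) U
  rw [hbal0] at this
  omega

end Final
end Stmt5

/-- In an eulerian digraph, if every edge cut of the underlying
undirected graph separating distinct vertices `s` and `t` has at least `4`
edges, then there is a directed euler circuit interlacing `s` and `t`,
i.e. whose vertex sequence contains `s, t, s, t` in that (cyclic) order. -/
theorem stmt_5 {V A : Type} [Fintype V] [Fintype A] (src tgt : A → V)
    (hbal : ∀ v : V, {a : A | tgt a = v}.ncard = {a : A | src a = v}.ncard)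
    (hconn : ∀ u v : V, ∃ l : List A, IsDiWalk src tgt u v l)
    (s t : V) (hst : s ≠ t)
    (hcut : ∀ U : Set V, s ∈ U → t ∉ U →
      4 ≤ {a : A | (src a ∈ U ∧ tgt a ∉ U) ∨ (tgt a ∈ U ∧ src a ∉ U)}.ncard) :
    ∃ (u : V) (l : List A), IsDiWalk src tgt u u l ∧ l.Nodup ∧
      (∀ a : A, a ∈ l) ∧ [s, t, s, t].Sublist (u :: l.map tgt) := by
  classical
  open Stmt5 in
  -- balance in `deg` form
  have hbalF : ∀ v, deg tgt (Finset.univ : Finset A) v =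
      deg src (Finset.univ : Finset A) v := by
    intro v
    have h := hbal v
    rwa [Set.ncard_eq_toFinset_card', Set.toFinset_setOf,
      Set.ncard_eq_toFinset_card', Set.toFinset_setOf] at h
  -- cut hypothesis in `Finset` form
  have hcut4 : ∀ U : Finset V, s ∈ U → t ∉ U →
      4 ≤ (Finset.univ.filter (fun a : A =>
        (src a ∈ U ∧ tgt a ∉ U) ∨ (tgt a ∈ U ∧ src a ∉ U))).card := by
    intro U hs ht
    have h := hcut (↑U : Set V) (by simpa) (by simpa)
    rwa [Set.ncard_eq_toFinset_card', Set.toFinset_setOf] at h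
  -- directed cut bound, `s` side
  have hdir : ∀ U : Finset V, s ∈ U → t ∉ U →
      2 ≤ (Finset.univ.filter (fun a : A => src a ∈ U ∧ tgt a ∉ U)).card ∧
      (Finset.univ.filter (fun a : A => tgt a ∈ U ∧ src a ∉ U)).card =
        (Finset.univ.filter (fun a : A => src a ∈ U ∧ tgt a ∉ U)).card :=
    fun U hs ht => dir_cut_bound src tgt hbalF s t U (hcut4 U hs ht)
  -- directed cut bound, `t` side
  have hdir' : ∀ U : Finset V, t ∈ U → s ∉ U →
      2 ≤ (Finset.univ.filter (fun a : A => src a ∈ U ∧ tgt a ∉ U)).card ∧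
      (Finset.univ.filter (fun a : A => tgt a ∈ U ∧ src a ∉ U)).card =
        (Finset.univ.filter (fun a : A => src a ∈ U ∧ tgt a ∉ U)).card := by
    intro U ht hs
    have h4 := hcut4 (Finset.univ \ U) (by simp [hs]) (by simp [ht])
    have hiff : ∀ a : A, ((src a ∈ Finset.univ \ U ∧ tgt a ∉ Finset.univ \ U) ∨
        (tgt a ∈ Finset.univ \ U ∧ src a ∉ Finset.univ \ U)) ↔
        ((src a ∈ U ∧ tgt a ∉ U) ∨ (tgt a ∈ U ∧ src a ∉ U)) := by
      intro a
      simp only [Finset.mem_sdiff, Finset.mem_univ, true_and, not_not]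
      tauto
    rw [Finset.filter_congr (fun a _ => hiff a)] at h4
    exact dir_cut_bound src tgt hbalF t s U h4
  -- two arc-disjoint s→t trails
  have hAfull : ∀ U : Finset V, s ∈ U → t ∉ U →
      2 ≤ ((Finset.univ : Finset A).filter (fun a => src a ∈ U ∧ tgt a ∉ U)).card :=
    fun U hs ht => (hdir U hs ht).1
  obtain ⟨P1, P2, hP1w, hP2w, hP1nd, hP2nd, _, _, hP12⟩ :=
    two_trails src tgt s t hst Finset.univ hAfull
  -- the remaining arcs
  set R2 : Finset A := Finset.univ \ (P1.toFinset ∪ P2.toFinset) with hR2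
  have hP1dvg := trail_dvg src tgt hP1w hP1nd
  have hP2dvg := trail_dvg src tgt hP2w hP2nd
  have hPdisj : Disjoint P1.toFinset P2.toFinset := by
    rw [Finset.disjoint_left]
    intro a ha
    simp only [List.mem_toFinset] at ha ⊢
    exact hP12 a ha
  -- cut bound for remaining arcs, t side
  have hR2cut : ∀ U : Finset V, t ∈ U → s ∉ U →
      2 ≤ (R2.filter (fun a => src a ∈ U ∧ tgt a ∉ U)).card := by
    intro U ht hs
    obtain ⟨hc2, hceq⟩ := hdir' U ht hs
    -- crossing counts of P1 and P2
    have hx1 : ((P1.toFinset.filter (fun a => src a ∈ U ∧ tgt a ∉ U)).card : ℤ) -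
        (P1.toFinset.filter (fun a => tgt a ∈ U ∧ src a ∉ U)).card = -1 := by
      have := sum_dvg src tgt P1.toFinset U
      rw [Finset.sum_congr rfl (fun v _ => hP1dvg v), Finset.sum_sub_distrib,
        Finset.sum_ite_eq, Finset.sum_ite_eq, if_neg hs, if_pos ht] at this
      omega
    have hx2 : ((P2.toFinset.filter (fun a => src a ∈ U ∧ tgt a ∉ U)).card : ℤ) -
        (P2.toFinset.filter (fun a => tgt a ∈ U ∧ src a ∉ U)).card = -1 := by
      have := sum_dvg src tgt P2.toFinset U
      rw [Finset.sum_congr rfl (fun v _ => hP2dvg v), Finset.sum_sub_distrib,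
        Finset.sum_ite_eq, Finset.sum_ite_eq, if_neg hs, if_pos ht] at this
      omega
    -- R2 filter card: forward direction
    have hru := filter_sdiff_card (Finset.subset_univ (P1.toFinset ∪ P2.toFinset))
      (fun a => src a ∈ U ∧ tgt a ∉ U)
    have hufwd : ((P1.toFinset ∪ P2.toFinset).filter (fun a => src a ∈ U ∧ tgt a ∉ U)).card =
        (P1.toFinset.filter (fun a => src a ∈ U ∧ tgt a ∉ U)).card +
        (P2.toFinset.filter (fun a => src a ∈ U ∧ tgt a ∉ U)).card := by
      rw [Finset.filter_union, Finset.card_union_of_disjoint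
        (Finset.disjoint_filter_filter hPdisj)]
    have hubwd : ((P1.toFinset ∪ P2.toFinset).filter (fun a => tgt a ∈ U ∧ src a ∉ U)).card =
        (P1.toFinset.filter (fun a => tgt a ∈ U ∧ src a ∉ U)).card +
        (P2.toFinset.filter (fun a => tgt a ∈ U ∧ src a ∉ U)).card := by
      rw [Finset.filter_union, Finset.card_union_of_disjoint
        (Finset.disjoint_filter_filter hPdisj)]
    have hble : ((P1.toFinset ∪ P2.toFinset).filter (fun a => tgt a ∈ U ∧ src a ∉ U)).card ≤
        ((Finset.univ : Finset A).filter (fun a => tgt a ∈ U ∧ src a ∉ U)).card :=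
      Finset.card_le_card (Finset.filter_subset_filter _ (Finset.subset_univ _))
    rw [hR2]
    omega
  -- two arc-disjoint t→s trails in R2
  obtain ⟨Q1, Q2, hQ1w, hQ2w, hQ1nd, hQ2nd, hQ1R, hQ2R, hQ12⟩ :=
    two_trails src tgt t s hst.symm R2 hR2cut
  -- assemble the interlacing closed trail
  set l0 : List A := P1 ++ (Q1 ++ (P2 ++ Q2)) with hl0
  have hQP : ∀ a : A, a ∈ R2 → a ∉ P1 ∧ a ∉ P2 := by
    intro a ha
    rw [hR2, Finset.mem_sdiff, Finset.mem_union] at ha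
    push_neg at ha
    exact ⟨fun h => ha.2.1 (List.mem_toFinset.2 h), fun h => ha.2.2 (List.mem_toFinset.2 h)⟩
  have hl0w : IsDiWalk src tgt s s l0 :=
    walk_append src tgt hP1w (walk_append src tgt hQ1w
      (walk_append src tgt hP2w hQ2w))
  have hl0nd : l0.Nodup := by
    rw [hl0, List.nodup_append, List.nodup_append, List.nodup_append]
    refine ⟨hP1nd, ⟨hQ1nd, ⟨hP2nd, hQ2nd, ?_⟩, ?_⟩, ?_⟩
    · intro a ha _ hb rfl
      exact (hQP a (hQ2R a hb)).2 ha
    · intro a ha _ hb rfl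
      rcases List.mem_append.1 hb with h | h
      · exact (hQP a (hQ1R a ha)).2 h
      · exact hQ12 a ha h
    · intro a ha _ hb rfl
      rcases List.mem_append.1 hb with h | h
      · exact (hQP a (hQ1R a h)).1 ha
      · rcases List.mem_append.1 h with h2 | h2
        · exact hP12 a ha h2
        · exact (hQP a (hQ2R a h2)).1 ha
  -- the interlacing pattern
  have hP1ne : P1 ≠ [] := by
    intro h
    rw [h] at hP1w
    exact hst hP1w
  have hQ1ne : Q1 ≠ [] := by
    intro h
    rw [h] at hQ1w
    exact hst hQ1w.symm
  have hP2ne : P2 ≠ [] := by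
    intro h
    rw [h] at hP2w
    exact hst hP2w
  obtain ⟨m1, hm1⟩ := walk_map_tgt src tgt hP1w hP1ne
  obtain ⟨m2, hm2⟩ := walk_map_tgt src tgt hQ1w hQ1ne
  obtain ⟨m3, hm3⟩ := walk_map_tgt src tgt hP2w hP2ne
  have hpattern : [s, t, s, t].Sublist (s :: l0.map tgt) := by
    refine List.Sublist.cons₂ s ?_
    rw [hl0]
    simp only [List.map_append]
    have h1 : [t].Sublist (P1.map tgt) := List.singleton_sublist.2 (by rw [hm1]; simp)
    have h2 : [s].Sublist (Q1.map tgt) := List.singleton_sublist.2 (by rw [hm2]; simp)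
    have h3 : [t].Sublist (P2.map tgt ++ Q2.map tgt) :=
      List.singleton_sublist.2 (List.mem_append_left _ (by rw [hm3]; simp))
    have : ([t] ++ ([s] ++ [t])).Sublist
        (P1.map tgt ++ (Q1.map tgt ++ (P2.map tgt ++ Q2.map tgt))) :=
      h1.append (h2.append h3)
    simpa using this
  -- extend to an euler circuit
  obtain ⟨L, hLw, hLnd, hLall, hLsub⟩ := euler_extend src tgt hbalF hconn
    ((Finset.univ : Finset A) \ l0.toFinset).card l0 s hl0w hl0nd le_rfl
  refine ⟨s, L, hLw, hLnd, hLall, ?_⟩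
  exact hpattern.trans (List.Sublist.cons₂ s (hLsub.map tgt))
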